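/- For any two permutations r, s of {1,...,n}, Σ_{i=1}^n (r(i) − s(i))² ≤ n(n²−1)/3, with equality when s(i) = n + 1 − r(i) for all i. -/

import Mathlib

open Finset

lemma sum_range_id_real (n : ℕ) : ∑ j ∈ range n, (j : ℝ) = n * (n - 1) / 2 := by
  induction n with
  | zero => simp
  | succ m ih => rw [Finset.sum_range_succ, ih]; push_cast; ring

lemma sum_range_sq_real (n : ℕ) :
    ∑ j ∈ range n, (j : ℝ) ^ 2 = n * (n - 1) * (2 * n - 1) / 6 := by
  induction n with
  | zero => simp
  | succ m ih => rw [Finset.sum_range_succ, ih]; push_cast; ring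

lemma key_identity (n : ℕ) :
    ∑ j ∈ range n, (2 * (j : ℝ) + 1 - n) ^ 2 = n * ((n : ℝ) ^ 2 - 1) / 3 := by
  have h1 : ∑ j ∈ range n, (2 * (j : ℝ) + 1 - n) ^ 2
      = ∑ j ∈ range n, (4 * (j : ℝ) ^ 2 + (4 - 4 * n) * j + (1 - n) ^ 2) := by
    refine Finset.sum_congr rfl fun j _ => by ring
  rw [h1]
  simp only [Finset.sum_add_distrib, ← Finset.mul_sum, Finset.sum_const, nsmul_eq_mul]
  rw [sum_range_sq_real, sum_range_id_real, Finset.card_range]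
  ring

/-- For any two permutations `r, s` of `{1, ..., n}` (represented on `Fin n` with
values `r(i)+1, s(i)+1 ∈ {1,...,n}`), `Σ (r(i) − s(i))² ≤ n(n²−1)/3`, with equality
when `s(i) = n + 1 − r(i)` for all `i`. -/
theorem sum_sq_rank_diff_le
    {n : ℕ} (r s : Equiv.Perm (Fin n)) :
    (∑ i, ((((r i : ℕ) : ℝ) + 1) - (((s i : ℕ) : ℝ) + 1)) ^ 2
        ≤ n * ((n : ℝ) ^ 2 - 1) / 3) ∧
    ((∀ i, (((s i : ℕ) : ℝ) + 1) = (n : ℝ) + 1 - (((r i : ℕ) : ℝ) + 1)) →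
      ∑ i, ((((r i : ℕ) : ℝ) + 1) - (((s i : ℕ) : ℝ) + 1)) ^ 2
        = n * ((n : ℝ) ^ 2 - 1) / 3) := by
  set f : Fin n → ℝ := fun i => (i : ℝ) + 1 with hf
  have hrevval : ∀ i : Fin n, f (Fin.rev i) = (n : ℝ) - (i : ℝ) := by
    intro i
    have h : ((Fin.rev i : ℕ) : ℝ) = (n : ℝ) - ((i : ℕ) + 1) := by
      rw [Fin.val_rev, Nat.cast_sub i.isLt]
      push_cast; ring
    simp only [hf, h]; ring
  -- closed form for the extremal sum
  have hext : ∑ i : Fin n, (f i - f (Fin.rev i)) ^ 2 = n * ((n : ℝ) ^ 2 - 1) / 3 := by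
    have : ∀ i : Fin n, (f i - f (Fin.rev i)) ^ 2 = (2 * ((i : ℕ) : ℝ) + 1 - n) ^ 2 := by
      intro i; rw [hrevval]; simp only [hf]; ring
    rw [Finset.sum_congr rfl fun i _ => this i,
      Fin.sum_univ_eq_sum_range (fun k => (2 * (k : ℝ) + 1 - (n : ℝ)) ^ 2) n, key_identity]
  constructor
  · -- inequality
    have hantivary : Antivary f (f ∘ Fin.revPerm) := by
      intro i j h
      simp only [hf, Function.comp, Fin.revPerm_apply] at h ⊢
      have : (Fin.rev i : ℕ) < (Fin.rev j : ℕ) := by exact_mod_cast (by linarith : ((Fin.rev i : ℕ) : ℝ) < (Fin.rev j : ℕ))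
      have : (j : ℕ) < (i : ℕ) := by
        simp only [Fin.val_rev] at this; omega
      have : ((j : ℕ) : ℝ) ≤ (i : ℕ) := by exact_mod_cast this.le
      linarith
    set σ : Equiv.Perm (Fin n) := r.symm.trans s with hσ
    have hσdef : ∀ i, σ i = s (r.symm i) := fun i => rfl
    have h1 : ∑ i, (f (r i) - f (s i)) ^ 2 = ∑ i, (f i - f (σ i)) ^ 2 := by
      rw [← Equiv.sum_comp r (fun i => (f i - f (σ i)) ^ 2)]
      refine Finset.sum_congr rfl fun i _ => by
        rw [hσdef, Equiv.symm_apply_apply]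
    have hre : ∑ i, f i * (f ∘ Fin.revPerm) i
        ≤ ∑ i, f i * (f ∘ Fin.revPerm) ((σ.trans Fin.revPerm) i) :=
      hantivary.sum_mul_le_sum_mul_comp_perm
    have hre' : ∑ i, f i * f (Fin.rev i) ≤ ∑ i, f i * f (σ i) := by
      convert hre using 2 with i
      all_goals simp [Equiv.trans_apply, Fin.rev_rev, Fin.revPerm_apply, Function.comp_apply]
    have hsq : ∀ τ : Equiv.Perm (Fin n),
        ∑ i, (f i - f (τ i)) ^ 2 = 2 * ∑ i, f i ^ 2 - 2 * ∑ i, f i * f (τ i) := by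
      intro τ
      have : ∑ i, (f (τ i)) ^ 2 = ∑ i, f i ^ 2 := Equiv.sum_comp τ (fun i => f i ^ 2)
      have hx : ∑ i, (f i - f (τ i)) ^ 2
          = ∑ i, (f i ^ 2 + (f (τ i)) ^ 2 - 2 * (f i * f (τ i))) := by
        refine Finset.sum_congr rfl fun i _ => by ring
      rw [hx]
      simp only [Finset.sum_sub_distrib, Finset.sum_add_distrib, ← Finset.mul_sum, this]
      ring
    have hrev2 : ∑ i : Fin n, (f i - f (Fin.rev i)) ^ 2
        = 2 * ∑ i, f i ^ 2 - 2 * ∑ i, f i * f (Fin.rev i) := by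
      have := hsq Fin.revPerm
      simpa using this
    rw [h1, hsq σ, ← hext, hrev2]
    linarith
  · -- equality case
    intro h
    have : ∀ i, (f (r i) - f (s i)) ^ 2 = (2 * ((r i : ℕ) : ℝ) + 1 - n) ^ 2 := by
      intro i
      have := h i
      simp only [hf]
      rw [this]; ring
    calc ∑ i, (f (r i) - f (s i)) ^ 2
        = ∑ i, (2 * ((r i : ℕ) : ℝ) + 1 - n) ^ 2 :=
          Finset.sum_congr rfl fun i _ => this i
      _ = ∑ i : Fin n, (2 * ((i : ℕ) : ℝ) + 1 - n) ^ 2 :=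
          Equiv.sum_comp r (fun i => (2 * ((i : ℕ) : ℝ) + 1 - n) ^ 2)
      _ = n * ((n : ℝ) ^ 2 - 1) / 3 := by
          rw [Fin.sum_univ_eq_sum_range (fun k => (2 * (k : ℝ) + 1 - (n : ℝ)) ^ 2) n, key_identity]
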